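/- Let H_0 be an (n−k)×m parity-check matrix over F_{q^m} of the Gabidulin code Gab(h_0, k) where h_0 in F_{q^m}^m has rank weight m, and let the public code C_pub be generated by G_pub = S·G·Q^{-1} with S invertible, G a Moore generator matrix of Gab(g,k), g of rank weight n, and Q in GL_n(V) for an F_q-subspace V containing 1, γ^2, γ^{-2}. Then there exist at least q^m − 1 full-rank matrices M in V^{m×n} such that H_0·M is a parity-check matrix of C_pub, i.e., G_pub·M^T·H_0^T = 0. -/
import Mathlib

open Matrix

noncomputable section

/-- The `k × n` Moore matrix generated by `g`, with `(i,j)` entry `g j ^ q ^ i`. -/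
def moore (q k n : ℕ) {K : Type*} [Field K] (g : Fin n → K) : Matrix (Fin k) (Fin n) K :=
  fun i j => g j ^ q ^ (i : ℕ)

/-- The Gabidulin code `Gab(g, k)`: the row span over `K` of the Moore matrix of `g`. -/
def gab (q k n : ℕ) {K : Type*} [Field K] (g : Fin n → K) : Submodule K (Fin n → K) :=
  Submodule.span K (Set.range (moore q k n g))

/-- The rank weight of a vector: the `Fq`-dimension of the span of its entries. -/
def rankWt (Fq : Type*) [Field Fq] {K : Type*} [Field K] [Algebra Fq K] {n : ℕ}
    (x : Fin n → K) : ℕ :=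
  Module.finrank Fq (Submodule.span Fq (Set.range x))

/-- The rank weight of a matrix: the `Fq`-dimension of the span of all its entries. -/
def matRankWt (Fq : Type*) [Field Fq] {K : Type*} [Field K] [Algebra Fq K] {r c : ℕ}
    (A : Matrix (Fin r) (Fin c) K) : ℕ :=
  Module.finrank Fq (Submodule.span Fq {x : K | ∃ i j, A i j = x})

/-- Frobenius `x ↦ x ^ q ^ i` is `Fq`-linear on sums. -/
lemma frobSum {p q e : ℕ} [Fact p.Prime] (hq : q = p ^ e)
    {Fq K : Type*} [Field Fq] [Field K] [Algebra Fq K] [Fintype Fq] [CharP K p]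
    (hFq : Fintype.card Fq = q) (i : ℕ) {ι : Type*} (s : Finset ι) (c : ι → Fq) (x : ι → K) :
    (∑ j ∈ s, c j • x j) ^ q ^ i = ∑ j ∈ s, c j • (x j) ^ q ^ i := by
  have hqi : q ^ i = p ^ (e * i) := by rw [hq, pow_mul]
  have hc : ∀ a : Fq, a ^ q ^ i = a := by
    intro a; rw [← hFq]; exact FiniteField.pow_card_pow i a
  calc (∑ j ∈ s, c j • x j) ^ q ^ i
      = iterateFrobenius K p (e * i) (∑ j ∈ s, c j • x j) := by
        rw [iterateFrobenius_def, hqi]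
    _ = ∑ j ∈ s, iterateFrobenius K p (e * i) (c j • x j) := map_sum _ _ _
    _ = ∑ j ∈ s, c j • (x j) ^ q ^ i := by
        refine Finset.sum_congr rfl fun j _ => ?_
        rw [iterateFrobenius_def, ← hqi, Algebra.smul_def, mul_pow, ← map_pow, hc,
          ← Algebra.smul_def]

/-- With `H₀` a parity-check matrix of `Gab(h₀, k)` (`h₀` of rank weight
`m`), and the public code generated by `G_pub = S·G·Q⁻¹` (`S` invertible, `G` the Moore
matrix of `g` of rank weight `n`, `Q ∈ GL_n(V)` for `V = span_{F_q}{1, γ², γ⁻²}`), there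
are at least `q^m - 1` full-rank matrices `M ∈ V^{m×n}` with `G_pub·Mᵀ·H₀ᵀ = 0`. -/
theorem stmt11 {p q e m n k : ℕ} [Fact p.Prime] (hq : q = p ^ e)
    {Fq K : Type*} [Field Fq] [Field K] [Algebra Fq K] [Fintype Fq] [CharP K p]
    (hFq : Fintype.card Fq = q) (hm : Module.finrank Fq K = m)
    (hkn : k < n) (hnm : n ≤ m)
    (γ : K) (hγ : γ ≠ 0)
    (V : Submodule Fq K) (hV : V = Submodule.span Fq ({1, γ ^ 2, γ⁻¹ ^ 2} : Set K))
    (g : Fin n → K) (hg : rankWt Fq g = n)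
    (S : Matrix (Fin k) (Fin k) K) (hS : IsUnit S)
    (Q : Matrix (Fin n) (Fin n) K) (hQ : IsUnit Q) (hQV : ∀ i j, Q i j ∈ V)
    (Gpub : Matrix (Fin k) (Fin n) K) (hGpub : Gpub = S * moore q k n g * Q⁻¹)
    (h0 : Fin m → K) (hh0 : rankWt Fq h0 = m)
    (H0 : Matrix (Fin (n - k)) (Fin m) K)
    (hH0 : ∀ c : Fin m → K, c ∈ gab q k m h0 ↔ H0.mulVec c = 0) :
    q ^ m - 1 ≤ Set.ncard {M : Matrix (Fin m) (Fin n) K |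
      (∀ i j, M i j ∈ V) ∧ M.rank = n ∧ Gpub * M.transpose * H0.transpose = 0} := by
  classical
  have hn0 : 0 < n := Nat.pos_of_ne_zero (by omega)
  have hm0 : 0 < m := lt_of_lt_of_le hn0 hnm
  have hFD : FiniteDimensional Fq K := Module.finite_of_finrank_pos (by omega)
  have hfinK : Finite K := Module.finite_of_finite Fq
  have : Fintype K := Fintype.ofFinite K
  have hcardK : Fintype.card K = q ^ m := by
    rw [Module.card_eq_pow_finrank (K := Fq) (V := K), hm, hFq]
  -- n = m
  have hker : gab q k m h0 = LinearMap.ker H0.mulVecLin := by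
    ext c
    rw [LinearMap.mem_ker, Matrix.mulVecLin_apply]
    exact hH0 c
  have hdimgab : Module.finrank K (gab q k m h0) ≤ k := by
    refine le_trans (finrank_range_le_card (moore q k m h0)) ?_
    simp
  have hrn : Module.finrank K (LinearMap.range H0.mulVecLin)
      + Module.finrank K (LinearMap.ker H0.mulVecLin) = m := by
    rw [LinearMap.finrank_range_add_finrank_ker H0.mulVecLin, Module.finrank_fin_fun]
  have hrange : Module.finrank K (LinearMap.range H0.mulVecLin) ≤ n - k := by
    refine le_trans (Submodule.finrank_le _) ?_
    rw [Module.finrank_fin_fun]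
  have hmn : m = n := by
    have h1 : Module.finrank K (LinearMap.ker H0.mulVecLin) ≤ k := hker ▸ hdimgab
    omega
  -- spans
  have hgspan : Submodule.span Fq (Set.range g) = ⊤ := by
    apply Submodule.eq_top_of_finrank_eq
    rw [show Module.finrank Fq (Submodule.span Fq (Set.range g)) = n from hg, hm, hmn]
  have hhspan : Submodule.span Fq (Set.range h0) = ⊤ := by
    apply Submodule.eq_top_of_finrank_eq
    rw [show Module.finrank Fq (Submodule.span Fq (Set.range h0)) = m from hh0, hm]
  have hglin : LinearIndependent Fq g := by
    rw [linearIndependent_iff_card_eq_finrank_span, Fintype.card_fin]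
    exact hg.symm
  have hexg : ∀ x : K, ∃ c : Fin n → Fq, ∑ j, c j • g j = x := by
    intro x
    have : x ∈ Submodule.span Fq (Set.range g) := hgspan ▸ Submodule.mem_top
    exact (Submodule.mem_span_range_iff_exists_fun Fq).mp this
  have hexh : ∀ x : K, ∃ c : Fin m → Fq, ∑ l, c l • h0 l = x := by
    intro x
    have : x ∈ Submodule.span Fq (Set.range h0) := hhspan ▸ Submodule.mem_top
    exact (Submodule.mem_span_range_iff_exists_fun Fq).mp this
  have hQdet : IsUnit Q.det := (Matrix.isUnit_iff_isUnit_det Q).mp hQ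
  have hQtdet : IsUnit Qᵀ.det := by rwa [Matrix.det_transpose]
  -- construction
  let c : K → Fin m → Fin n → Fq := fun α l => (hexg (α * h0 l)).choose
  have hc : ∀ α l, ∑ j, c α l j • g j = α * h0 l := fun α l => (hexg (α * h0 l)).choose_spec
  let TK : K → Matrix (Fin m) (Fin n) K := fun α => Matrix.of fun l j => algebraMap Fq K (c α l j)
  let M : K → Matrix (Fin m) (Fin n) K := fun α => TK α * Qᵀ
  have hTKback : ∀ α, TK α = M α * Qᵀ⁻¹ := by
    intro α
    rw [show M α = TK α * Qᵀ from rfl, Matrix.mul_nonsing_inv_cancel_right _ _ hQtdet]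
  -- row computation
  have hrow : ∀ α (i : Fin k), ∀ l, (moore q k n g * (TK α)ᵀ) i l
      = α ^ q ^ (i : ℕ) * h0 l ^ q ^ (i : ℕ) := by
    intro α i l
    have : (moore q k n g * (TK α)ᵀ) i l = ∑ j, c α l j • g j ^ q ^ (i : ℕ) := by
      rw [Matrix.mul_apply]
      refine Finset.sum_congr rfl fun j _ => ?_
      rw [Matrix.transpose_apply, Algebra.smul_def]
      exact mul_comm _ _
    rw [this, ← frobSum hq hFq (i : ℕ) Finset.univ (c α l) g, hc, mul_pow]
  have hprod : ∀ α, Gpub * (M α)ᵀ * H0ᵀ = 0 := by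
    intro α
    have h2 : Gpub * (M α)ᵀ = S * (moore q k n g * (TK α)ᵀ) := by
      rw [hGpub, show M α = TK α * Qᵀ from rfl, Matrix.transpose_mul, Matrix.transpose_transpose,
        Matrix.mul_assoc (S * moore q k n g), ← Matrix.mul_assoc Q⁻¹ Q,
        Matrix.nonsing_inv_mul Q hQdet, Matrix.one_mul, Matrix.mul_assoc]
    have h3 : moore q k n g * (TK α)ᵀ * H0ᵀ = 0 := by
      ext i r
      have hmem : (fun l => α ^ q ^ (i : ℕ) * h0 l ^ q ^ (i : ℕ)) ∈ gab q k m h0 := by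
        have heq : (fun l => α ^ q ^ (i : ℕ) * h0 l ^ q ^ (i : ℕ))
            = α ^ q ^ (i : ℕ) • moore q k m h0 i := by
          funext l; simp [moore, Pi.smul_apply, smul_eq_mul]
        rw [heq]
        exact Submodule.smul_mem _ _ (Submodule.subset_span ⟨i, rfl⟩)
      have hz := (hH0 _).mp hmem
      have heq2 : (moore q k n g * (TK α)ᵀ * H0ᵀ) i r
          = H0.mulVec (fun l => α ^ q ^ (i : ℕ) * h0 l ^ q ^ (i : ℕ)) r := by
        rw [Matrix.mul_apply, Matrix.mulVec, dotProduct]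
        refine Finset.sum_congr rfl fun l _ => ?_
        rw [hrow α i l, Matrix.transpose_apply]
        exact mul_comm _ _
      rw [heq2, hz]
      rfl
    rw [h2, Matrix.mul_assoc, h3, Matrix.mul_zero]
  -- entries in V
  have hentries : ∀ α, ∀ i j, M α i j ∈ V := by
    intro α i j
    have heq : M α i j = ∑ s, c α i s • Q j s := by
      rw [show M α = TK α * Qᵀ from rfl, Matrix.mul_apply]
      refine Finset.sum_congr rfl fun s _ => ?_
      rw [Matrix.transpose_apply, Algebra.smul_def]
      rfl
    rw [heq]
    exact Submodule.sum_mem _ fun s _ => Submodule.smul_mem _ _ (hQV j s)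
  -- rank
  have hrank : ∀ α : K, α ≠ 0 → (M α).rank = n := by
    intro α hα
    obtain ⟨d, hd⟩ : ∃ d : Fin n → Fin m → Fq, ∀ j, ∑ l, d j l • h0 l = α⁻¹ * g j := by
      choose d hd using fun j => hexh (α⁻¹ * g j)
      exact ⟨d, hd⟩
    have hA : ∀ j j' : Fin n, (∑ l, d j l * c α l j') = if j = j' then 1 else 0 := by
      intro j j'
      have hsum : ∑ j'' : Fin n, (∑ l, d j l * c α l j'') • g j'' = g j := by
        calc ∑ j'' : Fin n, (∑ l, d j l * c α l j'') • g j''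
            = ∑ j'' : Fin n, ∑ l, (d j l * c α l j'') • g j'' := by
              refine Finset.sum_congr rfl fun j'' _ => Finset.sum_smul
          _ = ∑ l, ∑ j'' : Fin n, (d j l * c α l j'') • g j'' := Finset.sum_comm
          _ = ∑ l, d j l • ∑ j'' : Fin n, c α l j'' • g j'' := by
              refine Finset.sum_congr rfl fun l _ => ?_
              rw [Finset.smul_sum]
              exact Finset.sum_congr rfl fun j'' _ => mul_smul _ _ _
          _ = ∑ l, d j l • (α * h0 l) := by
              refine Finset.sum_congr rfl fun l _ => by rw [hc]
          _ = α * ∑ l, d j l • h0 l := by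
              rw [Finset.mul_sum]
              exact Finset.sum_congr rfl fun l _ => (Algebra.mul_smul_comm _ _ _).symm
          _ = α * (α⁻¹ * g j) := by rw [hd]
          _ = g j := by field_simp
      have hdelta : ∑ j'' : Fin n, (if j = j'' then (1 : Fq) else 0) • g j'' = g j := by
        simp [ite_smul]
      set u : Fin n → Fq := fun j'' => (∑ l, d j l * c α l j'') - (if j = j'' then 1 else 0)
        with hu
      have hzero : ∑ j'' : Fin n, u j'' • g j'' = 0 := by
        simp only [hu, sub_smul, Finset.sum_sub_distrib, hsum, hdelta, sub_self]
      have := Fintype.linearIndependent_iff.mp hglin u hzero j'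
      simpa [hu, sub_eq_zero] using this
    set DK : Matrix (Fin n) (Fin m) K := Matrix.of fun j l => algebraMap Fq K (d j l) with hDK
    have hTT : DK * TK α = 1 := by
      ext j j'
      rw [Matrix.mul_apply]
      have : ∑ l, DK j l * TK α l j' = algebraMap Fq K (∑ l, d j l * c α l j') := by
        rw [map_sum]
        refine Finset.sum_congr rfl fun l _ => ?_
        show algebraMap Fq K (d j l) * algebraMap Fq K (c α l j') = _
        rw [_root_.map_mul]
      rw [this, hA j j', Matrix.one_apply]
      split <;> simp
    have h1 : (M α).rank ≤ n := Matrix.rank_le_width (M α)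
    have h2 : n ≤ (M α).rank := by
      calc n = (1 : Matrix (Fin n) (Fin n) K).rank := by
              rw [Matrix.rank_one, Fintype.card_fin]
        _ = (DK * TK α).rank := by rw [hTT]
        _ ≤ (TK α).rank := Matrix.rank_mul_le_right _ _
        _ = (M α * Qᵀ⁻¹).rank := by rw [← hTKback]
        _ ≤ (M α).rank := Matrix.rank_mul_le_left _ _
    omega
  -- injectivity
  have hMinj : ∀ α β : K, M α = M β → α = β := by
    intro α β hMeq
    have hTK : TK α = TK β := by rw [hTKback α, hTKback β, hMeq]
    have hval : ∀ l, α * h0 l = β * h0 l := by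
      intro l
      rw [← hc α l, ← hc β l]
      refine Finset.sum_congr rfl fun j _ => ?_
      have hj : c α l j = c β l j := by
        apply (algebraMap Fq K).injective
        exact Matrix.ext_iff.mpr hTK l j
      rw [hj]
    obtain ⟨l, hl⟩ : ∃ l, h0 l ≠ 0 := by
      by_contra hno
      push_neg at hno
      have hbot : (⊤ : Submodule Fq K) ≤ ⊥ := by
        rw [← hhspan, Submodule.span_le]
        rintro x ⟨l, rfl⟩
        simp [hno l]
      have h1top : (1 : K) ∈ (⊥ : Submodule Fq K) := hbot Submodule.mem_top
      exact one_ne_zero ((Submodule.mem_bot Fq).mp h1top)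
    exact mul_right_cancel₀ hl (hval l)
  -- counting
  have hsub : (fun α => M α) '' {α : K | α ≠ 0} ⊆ {M : Matrix (Fin m) (Fin n) K |
      (∀ i j, M i j ∈ V) ∧ M.rank = n ∧ Gpub * M.transpose * H0.transpose = 0} := by
    rintro _ ⟨α, hα, rfl⟩
    exact ⟨hentries α, hrank α hα, hprod α⟩
  have hinj : Set.InjOn (fun α => M α) {α : K | α ≠ 0} := fun a _ b _ h => hMinj a b h
  have himg : ((fun α => M α) '' {α : K | α ≠ 0}).ncard = {α : K | α ≠ 0}.ncard :=
    Set.ncard_image_of_injOn hinj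
  have hcn : {α : K | α ≠ 0}.ncard = q ^ m - 1 := by
    have h1 : insert (0 : K) {α : K | α ≠ 0} = Set.univ := by
      ext x; by_cases hx : x = 0 <;> simp [hx]
    have h2 : (insert (0 : K) {α : K | α ≠ 0}).ncard = {α : K | α ≠ 0}.ncard + 1 :=
      Set.ncard_insert_of_notMem (by simp) (Set.toFinite _)
    rw [h1, Set.ncard_univ, Nat.card_eq_fintype_card, hcardK] at h2
    omega
  calc q ^ m - 1 = {α : K | α ≠ 0}.ncard := hcn.symm
    _ = ((fun α => M α) '' {α : K | α ≠ 0}).ncard := himg.symm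
    _ ≤ _ := Set.ncard_le_ncard hsub (Set.toFinite _)
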